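/- arXiv:0803.4457 — 2 statements merged into one kernel-verified Lean document; each statement's English description precedes it below -/
import Mathlib

section
/- For every real α > 0 and every t > 0, the function t ↦ E_{α,1}(−t^α) is differentiable at t and its derivative equals −t^{α−1} E_{α,α}(−t^α). -/
open scoped Real


lemma ml_aux_summable (β b r : ℝ) (hβ : 0 < β) (hr : 0 ≤ r) :
    Summable (fun j : ℕ => r ^ j / Real.Gamma (β * j + b)) := by
  set E : ℝ := 2 * max r 1 with hE
  have hE1 : (1 : ℝ) ≤ E := by
    have : (1:ℝ) ≤ max r 1 := le_max_right _ _
    nlinarith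
  have hE0 : (0:ℝ) ≤ E := by linarith
  set D : ℝ := E ^ (1 / β) with hD
  have hD1 : (1:ℝ) ≤ D := Real.one_le_rpow hE1 (by positivity)
  have hD0 : (0:ℝ) < D := lt_of_lt_of_le one_pos hD1
  -- eventually D^n ≤ n!
  have h0 : Filter.Tendsto (fun n : ℕ => D ^ n / (n.factorial)) Filter.atTop (nhds 0) :=
    (Real.summable_pow_div_factorial D).tendsto_atTop_zero
  obtain ⟨N₁, hN₁⟩ := Filter.eventually_atTop.1 (h0.eventually (gt_mem_nhds one_pos))
  have hfact : ∀ n ≥ N₁, D ^ n ≤ ((n.factorial) : ℝ) := by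
    intro n hn
    have h1 := hN₁ n hn
    have h2 : (0:ℝ) < ((n.factorial) : ℝ) := by positivity
    rw [div_lt_one h2] at h1
    exact h1.le
  -- eventually β j + b is large
  have htend : Filter.Tendsto (fun j : ℕ => β * j + b) Filter.atTop Filter.atTop :=
    Filter.tendsto_atTop_add_const_right _ b
      (Filter.Tendsto.const_mul_atTop hβ tendsto_natCast_atTop_atTop)
  obtain ⟨J, hJ⟩ := Filter.eventually_atTop.1 (htend.eventually_ge_atTop ((N₁ : ℝ) + 3))
  -- bound on the tail
  have key : ∀ j ≥ J, 0 ≤ r ^ j / Real.Gamma (β * j + b) ∧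
      r ^ j / Real.Gamma (β * j + b) ≤ D ^ (2 - b) * (1/2) ^ j := by
    intro j hj
    set x : ℝ := β * j + b with hx
    have hx3 : (N₁ : ℝ) + 3 ≤ x := hJ j hj
    set n : ℕ := ⌊x⌋₊ with hn
    have hxpos : (0:ℝ) < x := by
      have h := Nat.cast_nonneg (α := ℝ) N₁; linarith
    have hnx : (n : ℝ) ≤ x := Nat.floor_le hxpos.le
    have hxn : x < n + 1 := Nat.lt_floor_add_one x
    have hnN : N₁ + 3 ≤ n := by
      have := Nat.le_floor (α := ℝ) (by push_cast; linarith : ((N₁ + 3 : ℕ) : ℝ) ≤ x)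
      exact this
    have hn1 : 1 ≤ n := by omega
    -- Γ(x) ≥ (n-1)!
    have hmono := Real.Gamma_strictMonoOn_Ici.monotoneOn
      (Set.mem_Ici.2 (by exact_mod_cast by omega : (2:ℝ) ≤ (n:ℝ)))
      (Set.mem_Ici.2 (by linarith : (2:ℝ) ≤ x)) hnx
    have hgn : Real.Gamma (n : ℝ) = ((n-1).factorial : ℝ) := by
      have : ((n : ℝ)) = ((n - 1 : ℕ) : ℝ) + 1 := by
        rw [Nat.cast_sub hn1]; norm_num
      rw [this, Real.Gamma_nat_eq_factorial]
    have hfac_le : ((n-1).factorial : ℝ) ≤ Real.Gamma x := by rw [← hgn]; exact hmono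
    have hfacpos : (0:ℝ) < ((n-1).factorial : ℝ) := by positivity
    have hGpos : 0 < Real.Gamma x := lt_of_lt_of_le hfacpos hfac_le
    constructor
    · positivity
    -- r^j ≤ (1/2)^j * D^(2-b) * (n-1)!
    have hDn : D ^ (n - 1) ≤ ((n-1).factorial : ℝ) := hfact (n-1) (by omega)
    have hrE : r ^ j ≤ (1/2) ^ j * E ^ j := by
      have : r ≤ (1/2) * E := by
        have : r ≤ max r 1 := le_max_left _ _
        rw [hE]; linarith
      calc r ^ j ≤ ((1/2) * E) ^ j := pow_le_pow_left₀ hr this j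
        _ = (1/2)^j * E^j := mul_pow _ _ _
    have hEj : E ^ j = D ^ (β * j) := by
      rw [hD, ← Real.rpow_natCast E j, ← Real.rpow_mul hE0]
      congr 1; field_simp
    have hDmono : D ^ (β * j) ≤ D ^ ((n:ℝ) + 1 - b) := by
      apply Real.rpow_le_rpow_of_exponent_le hD1
      have h := hxn; rw [hx] at h; linarith
    have hsplit : D ^ ((n:ℝ) + 1 - b) = D ^ (2 - b) * D ^ (n - 1) := by
      rw [← Real.rpow_natCast D (n-1), ← Real.rpow_add hD0]
      congr 1
      have : ((n - 1 : ℕ) : ℝ) = (n : ℝ) - 1 := by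
        rw [Nat.cast_sub hn1]; norm_num
      rw [this]; ring
    have hrfinal : r ^ j ≤ (1/2)^j * (D ^ (2 - b) * ((n-1).factorial : ℝ)) := by
      calc r ^ j ≤ (1/2)^j * E^j := hrE
        _ = (1/2)^j * D ^ (β * j) := by rw [hEj]
        _ ≤ (1/2)^j * D ^ ((n:ℝ) + 1 - b) := by
            apply mul_le_mul_of_nonneg_left hDmono (by positivity)
        _ = (1/2)^j * (D ^ (2 - b) * D ^ (n - 1)) := by rw [hsplit]
        _ ≤ (1/2)^j * (D ^ (2 - b) * ((n-1).factorial : ℝ)) := by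
            apply mul_le_mul_of_nonneg_left _ (by positivity)
            exact mul_le_mul_of_nonneg_left hDn (by positivity)
    rw [div_le_iff₀ hGpos]
    calc r ^ j ≤ (1/2)^j * (D ^ (2 - b) * ((n-1).factorial : ℝ)) := hrfinal
      _ ≤ (1/2)^j * (D ^ (2 - b) * Real.Gamma x) := by
          apply mul_le_mul_of_nonneg_left _ (by positivity)
          exact mul_le_mul_of_nonneg_left hfac_le (by positivity)
      _ = D ^ (2 - b) * (1/2)^j * Real.Gamma x := by ring
  -- conclude summability via shifted comparison
  rw [← summable_nat_add_iff J]
  apply Summable.of_nonneg_of_le (fun k => (key (k + J) (by omega)).1)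
    (fun k => (key (k + J) (by omega)).2)
  apply Summable.mul_left
  exact (summable_geometric_of_lt_one (by norm_num) (by norm_num)).comp_injective
    (add_left_injective J)

/-- Real-valued generalized Mittag-Leffler function
`E_{α,ρ}(x) = Σ_{j=0}^∞ x^j / Γ(αj + ρ)`. -/
noncomputable def mittagLefflerReal (α ρ x : ℝ) : ℝ :=
  ∑' j : ℕ, x ^ j / Real.Gamma (α * j + ρ)

/-- For `α > 0` and `t > 0`, `d/dt E_{α,1}(−t^α) = −t^{α−1} E_{α,α}(−t^α)`. -/
theorem hasDerivAt_mittagLeffler_neg_rpow (α : ℝ) (hα : 0 < α) (t : ℝ) (ht : 0 < t) :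
    HasDerivAt (fun s : ℝ => mittagLefflerReal α 1 (-(s ^ α)))
      (-(t ^ (α - 1)) * mittagLefflerReal α α (-(t ^ α))) t := by
  have hC : (0:ℝ) < (2*t) ^ α := Real.rpow_pos_of_pos (by linarith) α
  set C : ℝ := (2*t) ^ α with hCdef
  set g : ℕ → ℝ → ℝ := fun j s => (-(s ^ α)) ^ j / Real.Gamma (α * j + 1) with hgdef
  set g' : ℕ → ℝ → ℝ :=
    fun j y => (-1:ℝ) ^ j / Real.Gamma (α * j + 1) * (α * j * y ^ (α * j - 1)) with hg'def
  set u : ℕ → ℝ := fun j => (2/t) * α * (2*C) ^ j / Real.Gamma (α * j + 1) with hudef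
  have hGpos : ∀ j : ℕ, 0 < Real.Gamma (α * j + 1) := fun j =>
    Real.Gamma_pos_of_pos (by positivity)
  have hs_open : IsOpen (Set.Ioo (t/2) (2*t)) := isOpen_Ioo
  have hs_conn : IsPreconnected (Set.Ioo (t/2) (2*t)) := (convex_Ioo _ _).isPreconnected
  have ht_mem : t ∈ Set.Ioo (t/2) (2*t) := ⟨by linarith, by linarith⟩
  -- derivatives
  have hg : ∀ (j : ℕ) (y : ℝ), y ∈ Set.Ioo (t/2) (2*t) → HasDerivAt (g j) (g' j y) y := by
    intro j y hy
    have hy0 : 0 < y := lt_trans (by linarith) hy.1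
    have hr : HasDerivAt (fun s : ℝ => s ^ (α * j))
        (α * j * y ^ (α * j - 1)) y := Real.hasDerivAt_rpow_const (Or.inl hy0.ne')
    have h2 := hr.const_mul ((-1:ℝ) ^ j / Real.Gamma (α * j + 1))
    refine HasDerivAt.congr_of_eventuallyEq h2 ?_
    filter_upwards [IsOpen.mem_nhds isOpen_Ioi hy0] with z hz
    have hz0 : (0:ℝ) < z := hz
    show (-(z ^ α)) ^ j / Real.Gamma (α * j + 1)
        = (-1:ℝ) ^ j / Real.Gamma (α * j + 1) * z ^ (α * j)
    rw [neg_pow, ← Real.rpow_natCast (z ^ α) j, ← Real.rpow_mul hz0.le]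
    ring
  -- bounds on derivatives
  have hg' : ∀ (j : ℕ) (y : ℝ), y ∈ Set.Ioo (t/2) (2*t) → ‖g' j y‖ ≤ u j := by
    intro j y hy
    have hy0 : 0 < y := lt_trans (by linarith) hy.1
    have hynorm : ‖g' j y‖ = α * j * y ^ (α * j - 1) / Real.Gamma (α * j + 1) := by
      show |(-1:ℝ) ^ j / Real.Gamma (α * j + 1) * (α * j * y ^ (α * j - 1))| = _
      rw [abs_mul, abs_div, abs_pow, abs_neg, abs_one, one_pow, abs_of_pos (hGpos j),
        abs_of_nonneg (by positivity : (0:ℝ) ≤ α * j * y ^ (α * j - 1))]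
      ring
    have hnum : α * j * y ^ (α * j - 1) ≤ (2/t) * α * (2*C) ^ j := by
      have h1 : y ^ (α * (j:ℝ)) ≤ (2*t) ^ (α * (j:ℝ)) :=
        Real.rpow_le_rpow hy0.le hy.2.le (by positivity)
      have h2 : (2*t) ^ (α * (j:ℝ)) = C ^ j := by
        rw [hCdef, ← Real.rpow_natCast ((2*t) ^ α) j, ← Real.rpow_mul (by linarith : (0:ℝ) ≤ 2*t)]
      have h1y : 1/y ≤ 2/t := by
        rw [div_le_div_iff₀ hy0 ht]
        nlinarith [hy.1]
      have hkey : y ^ (α * (j:ℝ) - 1) ≤ C ^ j * (2/t) := by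
        rw [Real.rpow_sub hy0, Real.rpow_one, div_eq_mul_one_div]
        exact mul_le_mul (h1.trans_eq h2) h1y (by positivity) (by positivity)
      have hj2 : (j:ℝ) ≤ 2 ^ j := by exact_mod_cast (Nat.lt_two_pow_self (n := j)).le
      calc α * j * y ^ (α * (j:ℝ) - 1) ≤ α * j * (C ^ j * (2/t)) := by
            apply mul_le_mul_of_nonneg_left hkey (by positivity)
        _ ≤ α * 2 ^ j * (C ^ j * (2/t)) := by
            apply mul_le_mul_of_nonneg_right
              (mul_le_mul_of_nonneg_left hj2 hα.le) (by positivity)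
        _ = (2/t) * α * (2*C) ^ j := by rw [mul_pow]; ring
    rw [hynorm]
    exact (div_le_div_iff_of_pos_right (hGpos j)).mpr hnum
  -- summability of the bounds
  have hu_sum : Summable u := by
    have h := (ml_aux_summable α 1 (2*C) hα (by positivity)).mul_left ((2/t) * α)
    simpa [hudef, mul_div_assoc] using h
  -- summability at the point t
  have hg0 : Summable fun j => g j t := by
    have hbase : Summable (fun j : ℕ => (t ^ α) ^ j / Real.Gamma (α * j + 1)) :=
      ml_aux_summable α 1 (t ^ α) hα (by positivity)
    apply Summable.of_norm_bounded hbase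
    intro j
    show |(-(t ^ α)) ^ j / Real.Gamma (α * j + 1)| ≤ _
    rw [abs_div, abs_pow, abs_neg, abs_of_pos (Real.rpow_pos_of_pos ht α),
      abs_of_pos (hGpos j)]
  have hmain : HasDerivAt (fun z : ℝ => ∑' j : ℕ, g j z) (∑' j : ℕ, g' j t) t :=
    hasDerivAt_tsum_of_isPreconnected hu_sum hs_open hs_conn hg hg' ht_mem hg0 ht_mem
  have hsum' : Summable (fun j => g' j t) :=
    Summable.of_norm_bounded hu_sum (fun j => hg' j t ht_mem)
  -- identify the sum of the derivatives
  have hkey : ∀ k : ℕ, g' (k+1) t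
      = -(t ^ (α-1)) * ((-(t ^ α)) ^ k / Real.Gamma (α * k + α)) := by
    intro k
    have hne : α * (k:ℝ) + α ≠ 0 := by positivity
    have hGpos2 : 0 < Real.Gamma (α * (k:ℝ) + α) :=
      Real.Gamma_pos_of_pos (by positivity)
    have hGam : Real.Gamma (α * ((k+1:ℕ):ℝ) + 1)
        = (α * k + α) * Real.Gamma (α * k + α) := by
      push_cast
      rw [show α * ((k:ℝ) + 1) = α * (k:ℝ) + α from by ring]
      exact Real.Gamma_add_one hne
    have hpow : t ^ (α * ((k+1:ℕ):ℝ) - 1) = t ^ (α - 1) * (t ^ α) ^ k := by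
      rw [← Real.rpow_natCast (t ^ α) k, ← Real.rpow_mul ht.le, ← Real.rpow_add ht]
      push_cast
      ring_nf
    show (-1:ℝ) ^ (k+1) / Real.Gamma (α * ((k+1:ℕ):ℝ) + 1)
        * (α * ((k+1:ℕ):ℝ) * t ^ (α * ((k+1:ℕ):ℝ) - 1)) = _
    rw [hGam, hpow, neg_pow (t ^ α) k]
    push_cast
    rw [pow_succ]
    field_simp
  have hsum_eq : (∑' j : ℕ, g' j t) = -(t ^ (α-1)) * mittagLefflerReal α α (-(t ^ α)) := by
    rw [hsum'.tsum_eq_zero_add]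
    have h0 : g' 0 t = 0 := by
      show (-1:ℝ) ^ 0 / Real.Gamma (α * (0:ℕ) + 1) * (α * (0:ℕ) * t ^ (α * (0:ℕ) - 1)) = 0
      simp
    rw [h0, zero_add]
    calc (∑' k : ℕ, g' (k+1) t)
        = ∑' k : ℕ, -(t ^ (α-1)) * ((-(t ^ α)) ^ k / Real.Gamma (α * k + α)) :=
          tsum_congr hkey
      _ = -(t ^ (α-1)) * ∑' k : ℕ, (-(t ^ α)) ^ k / Real.Gamma (α * k + α) := tsum_mul_left
      _ = -(t ^ (α-1)) * mittagLefflerReal α α (-(t ^ α)) := by rw [mittagLefflerReal]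
  have hfun : (fun s : ℝ => mittagLefflerReal α 1 (-(s ^ α))) = fun z : ℝ => ∑' j : ℕ, g j z := by
    funext s
    rfl
  rw [hfun, ← hsum_eq]
  exact hmain
end

section
/- For every real α > 0 and every t ≥ 0, the normalization relation E_{α,1}(−t^α) + ∫₀ᵗ (t−τ)^{α−1} E_{α,α}(−(t−τ)^α) dτ = 1 holds. -/
open scoped Real

open MeasureTheory Set

set_option maxHeartbeats 800000

/-- Lower bound for `Γ(y)` from restricting its integral to `Ioc c (c+1)`. -/
lemma gamma_lower_bound {c y : ℝ} (hc : 1 ≤ c) (hy : 1 ≤ y) :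
    c ^ (y - 1) * Real.exp (-(c + 1)) ≤ Real.Gamma y := by
  have hy0 : (0:ℝ) < y := lt_of_lt_of_le one_pos hy
  have hc0 : (0:ℝ) < c := lt_of_lt_of_le one_pos hc
  rw [Real.Gamma_eq_integral hy0]
  have hint : IntegrableOn (fun x : ℝ => Real.exp (-x) * x ^ (y - 1)) (Ioi 0) :=
    Real.GammaIntegral_convergent hy0
  have hsub : Ioc c (c + 1) ⊆ Ioi (0:ℝ) := fun x hx => lt_trans hc0 hx.1
  have h1 : (∫ x in Ioc c (c + 1), Real.exp (-x) * x ^ (y - 1)) ≤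
      ∫ x in Ioi (0:ℝ), Real.exp (-x) * x ^ (y - 1) := by
    apply setIntegral_mono_set hint
    · filter_upwards [self_mem_ae_restrict (measurableSet_Ioi : MeasurableSet (Ioi (0:ℝ)))]
        with x hx
      exact mul_nonneg (Real.exp_nonneg _) (Real.rpow_nonneg (le_of_lt hx) _)
    · exact HasSubset.Subset.eventuallyLE hsub
  refine le_trans ?_ h1
  have h2 : (∫ _x in Ioc c (c + 1), Real.exp (-(c + 1)) * c ^ (y - 1)) ≤
      ∫ x in Ioc c (c + 1), Real.exp (-x) * x ^ (y - 1) := by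
    apply setIntegral_mono_on
    · exact integrableOn_const (by simp [Real.volume_Ioc])
    · exact hint.mono_set hsub
    · exact measurableSet_Ioc
    · intro x hx
      have hx1 : c < x := hx.1
      have hx2 : x ≤ c + 1 := hx.2
      apply mul_le_mul
      · exact Real.exp_le_exp.2 (by linarith)
      · exact Real.rpow_le_rpow hc0.le hx1.le (by linarith)
      · exact Real.rpow_nonneg hc0.le _
      · exact Real.exp_nonneg _
  refine le_trans (le_of_eq ?_) h2
  rw [setIntegral_const]
  rw [Real.volume_real_Ioc, show c + 1 - c = 1 by ring]
  simp [mul_comm]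

/-- Summability of the Mittag-Leffler series. -/
lemma summable_mittagLeffler {a : ℝ} (ha : 0 < a) (b x : ℝ) :
    Summable (fun j : ℕ => x ^ j / Real.Gamma (a * j + b)) := by
  set c : ℝ := max 1 ((2 * (|x| + 1)) ^ (1 / a)) with hcdef
  have hc1 : (1:ℝ) ≤ c := le_max_left _ _
  have hc0 : (0:ℝ) < c := lt_of_lt_of_le one_pos hc1
  have hbase : (0:ℝ) < 2 * (|x| + 1) := by positivity
  have hca : 2 * (|x| + 1) ≤ c ^ a := by
    have h1 : ((2 * (|x| + 1)) ^ (1 / a)) ^ a = 2 * (|x| + 1) := by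
      rw [← Real.rpow_mul hbase.le, one_div_mul_cancel ha.ne', Real.rpow_one]
    calc 2 * (|x| + 1) = ((2 * (|x| + 1)) ^ (1 / a)) ^ a := h1.symm
      _ ≤ c ^ a := Real.rpow_le_rpow (Real.rpow_nonneg hbase.le _) (le_max_right _ _) ha.le
  have hca0 : (0:ℝ) < c ^ a := Real.rpow_pos_of_pos hc0 a
  have hratio : |x| / c ^ a ≤ 1 / 2 := by
    rw [div_le_div_iff₀ hca0 (by norm_num)]
    nlinarith [abs_nonneg x]
  set K : ℝ := c ^ (1 - b) * Real.exp (c + 1) with hK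
  have hKpos : (0:ℝ) < K := mul_pos (Real.rpow_pos_of_pos hc0 _) (Real.exp_pos _)
  apply Summable.of_norm_bounded_eventually_nat (g := fun j => K * (1 / 2) ^ j)
    (((summable_geometric_of_lt_one (r := (1 / 2 : ℝ)) (by norm_num) (by norm_num)).mul_left K))
  filter_upwards [Filter.eventually_ge_atTop (⌈(1 - b) / a⌉₊)] with j hj
  have hyj : (1:ℝ) ≤ a * j + b := by
    have h1 : (1 - b) / a ≤ (j:ℝ) := le_trans (Nat.le_ceil _) (by exact_mod_cast hj)
    have := (div_le_iff₀ ha).1 h1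
    linarith
  have hyj0 : (0:ℝ) < a * j + b := lt_of_lt_of_le one_pos hyj
  have hΓpos : 0 < Real.Gamma (a * j + b) := Real.Gamma_pos_of_pos hyj0
  have hΓlb : c ^ (a * j + b - 1) * Real.exp (-(c + 1)) ≤ Real.Gamma (a * j + b) :=
    gamma_lower_bound hc1 hyj
  have hDpos : (0:ℝ) < c ^ (a * (j:ℝ) + b - 1) * Real.exp (-(c + 1)) :=
    mul_pos (Real.rpow_pos_of_pos hc0 _) (Real.exp_pos _)
  have hnorm : ‖x ^ j / Real.Gamma (a * j + b)‖ = |x| ^ j / Real.Gamma (a * j + b) := by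
    rw [norm_div, norm_pow, Real.norm_eq_abs, Real.norm_eq_abs, abs_of_pos hΓpos]
  rw [hnorm]
  have step1 : |x| ^ j / Real.Gamma (a * j + b) ≤
      |x| ^ j / (c ^ (a * (j:ℝ) + b - 1) * Real.exp (-(c + 1))) :=
    div_le_div_of_nonneg_left (pow_nonneg (abs_nonneg x) j) hDpos hΓlb
  refine le_trans step1 ?_
  have hsplit : c ^ (a * (j:ℝ) + b - 1) = (c ^ a) ^ j * c ^ (b - 1) := by
    rw [show a * (j:ℝ) + b - 1 = a * (j:ℝ) + (b - 1) by ring, Real.rpow_add hc0,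
      ← Real.rpow_natCast (c ^ a) j, ← Real.rpow_mul hc0.le]
  rw [hsplit]
  have hrw : |x| ^ j / ((c ^ a) ^ j * c ^ (b - 1) * Real.exp (-(c + 1)))
      = K * (|x| / c ^ a) ^ j := by
    rw [div_pow, hK, Real.exp_neg, Real.rpow_sub hc0, Real.rpow_one, Real.rpow_sub hc0,
      Real.rpow_one]
    field_simp
  rw [hrw]
  exact mul_le_mul_of_nonneg_left (pow_le_pow_left₀ (by positivity) hratio j) hKpos.le

/-- Normalization: `E_{α,1}(−t^α) + ∫₀ᵗ (t−τ)^{α−1} E_{α,α}(−(t−τ)^α) dτ = 1`. -/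
theorem normalization_branching_process (α : ℝ) (hα : 0 < α) (t : ℝ) (ht : 0 ≤ t) :
    mittagLefflerReal α 1 (-(t ^ α)) +
      ∫ τ in (0:ℝ)..t, (t - τ) ^ (α - 1) * mittagLefflerReal α α (-((t - τ) ^ α)) = 1 := by
  have hu : (0:ℝ) ≤ t ^ α := Real.rpow_nonneg ht α
  set u : ℝ := t ^ α with hudef
  -- the E_{α,1} series
  have hsum1 : Summable (fun k : ℕ => (-u) ^ k / Real.Gamma (α * k + 1)) :=
    summable_mittagLeffler hα 1 (-u)
  -- change of variables τ ↦ t - τ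
  have hcomp : (∫ τ in (0:ℝ)..t, (t - τ) ^ (α - 1) * mittagLefflerReal α α (-((t - τ) ^ α)))
      = ∫ s in (0:ℝ)..t, s ^ (α - 1) * mittagLefflerReal α α (-(s ^ α)) := by
    have := intervalIntegral.integral_comp_sub_left
      (a := (0:ℝ)) (b := t) (fun s => s ^ (α - 1) * mittagLefflerReal α α (-(s ^ α))) t
    simpa using this
  rw [hcomp, intervalIntegral.integral_of_le ht]
  -- coefficients
  set cc : ℕ → ℝ := fun j => (-1 : ℝ) ^ j / Real.Gamma (α * j + α) with hccdef
  have hΓj : ∀ j : ℕ, 0 < Real.Gamma (α * j + α) := by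
    intro j
    apply Real.Gamma_pos_of_pos
    have : (0:ℝ) ≤ α * j := by positivity
    linarith
  have hpow : ∀ j : ℕ, t ^ (α * (j:ℝ) + α) = u ^ (j + 1) := by
    intro j
    rw [show α * (j:ℝ) + α = α * ((j:ℝ) + 1) by ring, Real.rpow_mul ht, hudef]
    rw [← Real.rpow_natCast (t ^ α) (j + 1)]
    push_cast
    ring_nf
  -- the integrand as a series
  have hFeq : ∀ s ∈ Ioc (0:ℝ) t,
      s ^ (α - 1) * mittagLefflerReal α α (-(s ^ α))
        = ∑' j : ℕ, cc j * s ^ (α * (j:ℝ) + α - 1) := by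
    intro s hs
    have hs0 : (0:ℝ) < s := hs.1
    rw [mittagLefflerReal, ← tsum_mul_left]
    apply tsum_congr
    intro j
    have h1 : (-(s ^ α)) ^ j = (-1 : ℝ) ^ j * (s ^ α) ^ j := by
      rw [neg_pow]
    have h2 : (s ^ α) ^ j = s ^ (α * (j:ℝ)) := by
      rw [← Real.rpow_natCast (s ^ α) j, ← Real.rpow_mul hs0.le]
    have h3 : s ^ (α - 1) * s ^ (α * (j:ℝ)) = s ^ (α * (j:ℝ) + α - 1) := by
      rw [← Real.rpow_add hs0]; ring_nf
    rw [h1, h2, hccdef]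
    field_simp
    rw [h3]
    congr 1; ring
  rw [setIntegral_congr_fun measurableSet_Ioc hFeq]
  -- measurability
  have hmeas : ∀ j : ℕ, AEStronglyMeasurable (fun s : ℝ => cc j * s ^ (α * (j:ℝ) + α - 1))
      (volume.restrict (Ioc (0:ℝ) t)) := by
    intro j
    refine (continuousOn_const.mul ?_).aestronglyMeasurable measurableSet_Ioc
    exact ContinuousOn.rpow_const continuousOn_id fun x hx => Or.inl (ne_of_gt hx.1)
  -- integrability of each term
  have hpj : ∀ j : ℕ, (-1 : ℝ) < α * (j:ℝ) + α - 1 := by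
    intro j
    have : (0:ℝ) ≤ α * j := by positivity
    linarith
  have hint : ∀ j : ℕ, IntegrableOn (fun s : ℝ => cc j * s ^ (α * (j:ℝ) + α - 1))
      (Ioc (0:ℝ) t) := by
    intro j
    exact ((intervalIntegrable_iff_integrableOn_Ioc_of_le ht).1
      (intervalIntegral.intervalIntegrable_rpow' (hpj j))).const_mul _
  -- value of each integral
  have hval : ∀ j : ℕ, (∫ s in Ioc (0:ℝ) t, s ^ (α * (j:ℝ) + α - 1))
      = u ^ (j + 1) / (α * j + α) := by
    intro j
    rw [← intervalIntegral.integral_of_le ht, integral_rpow (Or.inl (hpj j))]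
    have h0 : (0:ℝ) ^ (α * (j:ℝ) + α - 1 + 1) = 0 := by
      apply Real.zero_rpow
      have : (0:ℝ) ≤ α * j := by positivity
      intro h; nlinarith
    rw [h0, show α * (j:ℝ) + α - 1 + 1 = α * (j:ℝ) + α by ring, hpow j, sub_zero]
  -- finiteness for integral_tsum
  have hB : ∀ j : ℕ, (∫ s in Ioc (0:ℝ) t, ‖cc j * s ^ (α * (j:ℝ) + α - 1)‖)
      = |cc j| * (u ^ (j + 1) / (α * j + α)) := by
    intro j
    rw [← hval j, ← integral_const_mul]
    apply setIntegral_congr_fun measurableSet_Ioc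
    intro s hs
    simp only [norm_mul, Real.norm_eq_abs]
    rw [abs_of_nonneg (Real.rpow_nonneg hs.1.le _)]
  have hBsummable : Summable (fun j : ℕ => |cc j| * (u ^ (j + 1) / (α * j + α))) := by
    have h1 : Summable (fun j : ℕ => u * (u ^ j / Real.Gamma (α * j + (α + 1)))) :=
      (summable_mittagLeffler hα (α + 1) u).mul_left u
    apply h1.congr
    intro j
    have hx0 : α * (j:ℝ) + α ≠ 0 := by
      have : (0:ℝ) ≤ α * j := by positivity
      intro h; nlinarith
    have hΓ1 : Real.Gamma (α * j + (α + 1)) = (α * j + α) * Real.Gamma (α * j + α) := by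
      rw [show α * (j:ℝ) + (α + 1) = (α * j + α) + 1 by ring, Real.Gamma_add_one hx0]
    have habs : |cc j| = 1 / Real.Gamma (α * j + α) := by
      rw [hccdef]
      simp [abs_div, abs_of_pos (hΓj j)]
    rw [hΓ1, habs, pow_succ]
    field_simp
  have hBnonneg : ∀ j : ℕ, 0 ≤ |cc j| * (u ^ (j + 1) / (α * j + α)) := by
    intro j
    have hx0 : (0:ℝ) < α * j + α := by positivity
    positivity
  have hfin : (∑' j : ℕ, ∫⁻ s in Ioc (0:ℝ) t, ‖cc j * s ^ (α * (j:ℝ) + α - 1)‖₊) ≠ ⊤ := by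
    have heq : ∀ j : ℕ, (∫⁻ s in Ioc (0:ℝ) t, ‖cc j * s ^ (α * (j:ℝ) + α - 1)‖₊)
        = ENNReal.ofReal (|cc j| * (u ^ (j + 1) / (α * j + α))) := by
      intro j
      rw [← hB j]; exact (ofReal_integral_norm_eq_lintegral_enorm (hint j)).symm
    rw [tsum_congr heq, ← ENNReal.ofReal_tsum_of_nonneg hBnonneg hBsummable]
    exact ENNReal.ofReal_ne_top
  -- interchange sum and integral
  rw [MeasureTheory.integral_tsum hmeas hfin]
  -- compute the resulting series
  have hterm : ∀ j : ℕ, (∫ s in Ioc (0:ℝ) t, cc j * s ^ (α * (j:ℝ) + α - 1))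
      = -((-u) ^ (j + 1) / Real.Gamma (α * (j + 1 : ℕ) + 1)) := by
    intro j
    rw [integral_const_mul, hval j]
    have hx0 : α * (j:ℝ) + α ≠ 0 := by
      have : (0:ℝ) ≤ α * j := by positivity
      intro h; nlinarith
    have hΓ1 : Real.Gamma (α * ((j:ℝ) + 1) + 1) = (α * j + α) * Real.Gamma (α * j + α) := by
      rw [show α * ((j:ℝ) + 1) + 1 = (α * j + α) + 1 by ring, Real.Gamma_add_one hx0]
    have hcast : ((j + 1 : ℕ) : ℝ) = (j:ℝ) + 1 := by push_cast; ring
    rw [hcast, hΓ1, hccdef]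
    have hneg : (-u) ^ (j + 1) = (-1:ℝ) ^ (j + 1) * u ^ (j + 1) := by rw [neg_pow]
    rw [hneg, pow_succ]
    field_simp
    ring
  rw [tsum_congr hterm, tsum_neg]
  -- telescope with the k = 0 term
  have hzero : (∑' k : ℕ, (-u) ^ k / Real.Gamma (α * k + 1))
      = 1 + ∑' j : ℕ, (-u) ^ (j + 1) / Real.Gamma (α * (j + 1 : ℕ) + 1) := by
    rw [Summable.tsum_eq_zero_add hsum1]
    norm_num [Real.Gamma_one]
  have hml : mittagLefflerReal α 1 (-u) = ∑' k : ℕ, (-u) ^ k / Real.Gamma (α * k + 1) := rfl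
  rw [hml, hzero]
  ring
end
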